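/- Every nonempty rich word w can be extended on the right: there exists a letter x such that wx is rich. -/

import Mathlib

def Rich {A : Type*} (w : List A) : Prop :=
  {p : List A | p.reverse = p ∧ p <:+: w}.ncard = w.length + 1

namespace RichAux

variable {A : Type*}

def P (w : List A) : Set (List A) := {p | p.reverse = p ∧ p <:+: w}

lemma rich_iff (w : List A) : Rich w ↔ (P w).ncard = w.length + 1 := Iff.rfl

lemma P_finite (w : List A) : (P w).Finite :=
  (w.sublists.finite_toSet).subset (fun _ hp => List.mem_sublists.2 hp.2.sublist)

lemma nil_mem_P (w : List A) : [] ∈ P w := ⟨rfl, List.nil_infix⟩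

lemma P_mono {u w : List A} (h : u <:+: w) : P u ⊆ P w :=
  fun _ hp => ⟨hp.1, hp.2.trans h⟩

/-- If `s ++ p ++ t = u ++ [a]` with `t ≠ []`, then `p` is an infix of `u`. -/
lemma infix_of_mid {u s p t : List A} {a : A} (h : s ++ p ++ t = u ++ [a]) (ht : t ≠ []) :
    p <:+: u := by
  rcases List.eq_nil_or_concat t with rfl | ⟨t', b, rfl⟩
  · exact absurd rfl ht
  · rw [List.concat_eq_append, ← List.append_assoc] at h
    obtain ⟨h1, _⟩ := List.append_inj' h (by simp)
    exact ⟨s, t', by rw [← h1, List.append_assoc]⟩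

/-- A new palindromic factor after appending a letter is a suffix. -/
lemma new_suffix {u : List A} {a : A} {p : List A} (hp : p <:+: u ++ [a])
    (hnot : ¬ p <:+: u) : p <:+ u ++ [a] := by
  obtain ⟨s, t, hst⟩ := hp
  rcases List.eq_nil_or_concat t with rfl | ⟨t', b, rfl⟩
  · exact ⟨s, by simpa using hst⟩
  · exact absurd (infix_of_mid hst (by simp)) hnot

lemma pal_suffix_prefix {p q : List A} (hp : p.reverse = p) (hq : q.reverse = q)
    (h : p <:+ q) : p <+: q := by
  rw [← List.reverse_prefix] at h
  rwa [hp, hq] at h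

lemma suffix_eq_of_length {p q : List A} (hp : p <:+ q) (h : p.length = q.length) : p = q := by
  obtain ⟨r, rfl⟩ := hp
  rw [List.length_append] at h
  have : r.length = 0 := by omega
  rw [List.length_eq_zero_iff.1 this, List.nil_append]

/-- Uniqueness of the new palindromic factor. -/
lemma new_unique {u : List A} {a : A} {p q : List A}
    (hp : p ∈ P (u ++ [a]) \ P u) (hq : q ∈ P (u ++ [a]) \ P u) : p = q := by
  have key : ∀ p q : List A, p ∈ P (u ++ [a]) \ P u → q ∈ P (u ++ [a]) \ P u →
      p.length ≤ q.length → p = q := by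
    intro p q hp hq hle
    have hps : p <:+ u ++ [a] := new_suffix hp.1.2 (fun h => hp.2 ⟨hp.1.1, h⟩)
    have hqs : q <:+ u ++ [a] := new_suffix hq.1.2 (fun h => hq.2 ⟨hq.1.1, h⟩)
    have hpq : p <:+ q := List.suffix_of_suffix_length_le hps hqs hle
    rcases eq_or_lt_of_le hle with heq | hlt
    · exact suffix_eq_of_length hpq heq
    · exfalso
      obtain ⟨r, hr⟩ := pal_suffix_prefix hp.1.1 hq.1.1 hpq
      obtain ⟨s, hs⟩ := hqs
      have hr' : r ≠ [] := by
        intro h; rw [h, List.append_nil] at hr; rw [hr] at hlt; omega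
      have : s ++ p ++ r = u ++ [a] := by rw [List.append_assoc, hr, hs]
      exact hp.2 ⟨hp.1.1, infix_of_mid this hr'⟩
  rcases le_total p.length q.length with h | h
  · exact key p q hp hq h
  · exact (key q p hq hp h).symm

lemma card_P_append_le (u : List A) (a : A) : (P (u ++ [a])).ncard ≤ (P u).ncard + 1 := by
  by_cases h : ∃ n, n ∈ P (u ++ [a]) \ P u
  · obtain ⟨n, hn⟩ := h
    have hsub : P (u ++ [a]) ⊆ insert n (P u) := by
      intro p hp
      by_cases hpu : p ∈ P u
      · exact Set.mem_insert_of_mem _ hpu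
      · exact (new_unique ⟨hp, hpu⟩ hn) ▸ Set.mem_insert _ _
    calc (P (u ++ [a])).ncard ≤ (insert n (P u)).ncard :=
          Set.ncard_le_ncard hsub ((P_finite u).insert n)
      _ ≤ (P u).ncard + 1 := Set.ncard_insert_le n (P u)
  · push_neg at h
    have hsub : P (u ++ [a]) ⊆ P u := fun p hp => by
      by_contra hc; exact h p ⟨hp, hc⟩
    exact le_trans (Set.ncard_le_ncard hsub (P_finite u)) (Nat.le_succ _)

lemma card_P_le (w : List A) : (P w).ncard ≤ w.length + 1 := by
  induction w using List.reverseRecOn with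
  | nil =>
    have : P ([] : List A) = {[]} := by
      ext p
      simp only [P, Set.mem_setOf_eq, Set.mem_singleton_iff]
      constructor
      · rintro ⟨-, h⟩; simpa using List.sublist_nil.1 h.sublist
      · rintro rfl; exact ⟨rfl, List.infix_rfl⟩
    simp [this]
  | append_singleton u a ih =>
    calc (P (u ++ [a])).ncard ≤ (P u).ncard + 1 := card_P_append_le u a
      _ ≤ u.length + 1 + 1 := by omega
      _ = (u ++ [a]).length + 1 := by simp

lemma rich_of_prefix {u w : List A} (h : u <+: w) (hw : Rich w) : Rich u := by
  obtain ⟨t, rfl⟩ := h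
  induction t using List.reverseRecOn with
  | nil => simpa using hw
  | append_singleton t a ih =>
    apply ih
    rw [rich_iff] at hw ⊢
    rw [← List.append_assoc] at hw
    have h1 := card_P_append_le (u ++ t) a
    have h2 := card_P_le (u ++ t)
    simp only [List.length_append, List.length_singleton] at hw h2 ⊢
    omega

lemma P_reverse (w : List A) : P w.reverse = P w := by
  ext p
  simp only [P, Set.mem_setOf_eq]
  constructor
  · rintro ⟨h1, h2⟩
    refine ⟨h1, ?_⟩
    rw [← List.reverse_infix, h1] at h2
    simpa using h2
  · rintro ⟨h1, h2⟩
    refine ⟨h1, ?_⟩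
    rw [← List.reverse_infix] at h2 ⊢
    rw [h1]
    simpa using h2

lemma rich_of_suffix {u w : List A} (h : u <:+ w) (hw : Rich w) : Rich u := by
  have h1 : u.reverse <+: w.reverse := List.reverse_prefix.2 h
  have hwr : Rich w.reverse := by
    rw [rich_iff, P_reverse, List.length_reverse]; exact hw
  have := rich_of_prefix h1 hwr
  rw [rich_iff, P_reverse, List.length_reverse] at this
  exact this

/-- Lemma D: in a rich nonempty word, the longest palindromic suffix is unioccurrent. -/
lemma lps_unioccurrent {v : List A} (hv : Rich v) (hne : v ≠ []) {p : List A}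
    (hpal : p.reverse = p) (hsuf : p <:+ v)
    (hmax : ∀ p', p'.reverse = p' → p' <:+ v → p'.length ≤ p.length) :
    ¬ p <:+: v.dropLast := by
  intro hcon
  set u := v.dropLast with hu
  have hva : v = u ++ [v.getLast hne] := (List.dropLast_append_getLast hne).symm
  have hur : Rich u := rich_of_prefix (List.dropLast_prefix v) hv
  have hlen : u.length + 1 = v.length := by
    conv_rhs => rw [hva]
    simp
  have hcard : (P u).ncard < (P v).ncard := by
    rw [(rich_iff v).1 hv, (rich_iff u).1 hur]; omega
  have hex : ∃ n, n ∈ P v \ P u := by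
    by_contra hc
    push_neg at hc
    have hsub : P v ⊆ P u := fun p hp => by
      by_contra h; exact hc p ⟨hp, h⟩
    exact absurd (Set.ncard_le_ncard hsub (P_finite u)) (by omega)
  obtain ⟨n, hn⟩ := hex
  have hninfix : n <:+: u ++ [v.getLast hne] := hva ▸ hn.1.2
  have hnotu : ¬ n <:+: u := fun h => hn.2 ⟨hn.1.1, h⟩
  have hnsuf : n <:+ v := hva ▸ new_suffix hninfix hnotu
  have hnlen : n.length ≤ p.length := hmax n hn.1.1 hnsuf
  have hnp : n <:+ p := List.suffix_of_suffix_length_le hnsuf hsuf hnlen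
  have hnpre : n <+: p := pal_suffix_prefix hn.1.1 hpal hnp
  exact hnotu (hnpre.isInfix.trans hcon)

lemma concat_comm_replicate {l : List A} {z : A} (h : z :: l = l ++ [z]) :
    l = List.replicate l.length z := by
  induction l generalizing z with
  | nil => rfl
  | cons a l ih =>
    rw [List.cons_append] at h
    obtain ⟨rfl, h2⟩ := List.cons_eq_cons.1 h
    rw [List.length_cons, List.replicate_succ]
    exact List.cons_eq_cons.2 ⟨rfl, ih h2⟩

end RichAux

open RichAux in
theorem stmt6 {A : Type*} [Fintype A] (w : List A) (hw : Rich w) (hne : w ≠ []) :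
    ∃ x : A, Rich (w ++ [x]) := by
  classical
  set v := w.tail with hvdef
  have hwpos : 0 < w.length := List.length_pos_iff.2 hne
  have hvsuf : v <:+ w := List.tail_suffix w
  have hvr : Rich v := rich_of_suffix hvsuf hw
  have hvlen : v.length + 1 = w.length := by rw [hvdef, List.length_tail]; omega
  -- longest palindromic suffix of v
  have hSfin : {p : List A | p.reverse = p ∧ p <:+ v}.Finite :=
    (P_finite v).subset (fun p hp => ⟨hp.1, hp.2.isInfix⟩)
  have hSne : {p : List A | p.reverse = p ∧ p <:+ v}.Nonempty :=
    ⟨[], rfl, List.nil_suffix⟩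
  obtain ⟨p₂, hp₂S, hp₂max'⟩ :=
    Set.Finite.exists_maximalFor List.length _ hSfin hSne
  have hmax : ∀ p', p'.reverse = p' → p' <:+ v → p'.length ≤ p₂.length := by
    intro p' h1 h2
    rcases le_total p'.length p₂.length with h | h
    · exact h
    · exact hp₂max' ⟨h1, h2⟩ h
  obtain ⟨hp₂pal, hp₂suf⟩ := hp₂S
  have hp₂w : p₂ <:+ w := hp₂suf.trans hvsuf
  have hp₂len : p₂.length ≤ v.length := hp₂suf.length_le
  -- z : the letter of w preceding p₂
  obtain ⟨s, hs⟩ := hp₂w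
  have hslen : 0 < s.length := by
    have := congrArg List.length hs
    rw [List.length_append] at this
    omega
  obtain ⟨s', z, rfl⟩ : ∃ s' z, s = s' ++ [z] := by
    rcases List.eq_nil_or_concat s with rfl | ⟨s', z, h⟩
    · simp at hslen
    · exact ⟨s', z, by simpa [List.concat_eq_append] using h⟩
  refine ⟨z, ?_⟩
  set q : List A := z :: (p₂ ++ [z]) with hq
  have hqpal : q.reverse = q := by
    rw [hq]
    simp [hp₂pal]
  have hqsufx : q <:+ w ++ [z] := ⟨s', by rw [← hs]; simp [hq]⟩
  have hqlen : q.length = p₂.length + 2 := by simp [hq]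
  -- q is a NEW palindrome
  have hqnew : q ∉ P w := by
    rintro ⟨-, hqinf⟩
    by_cases hqsw : q <:+ w
    · rcases lt_or_eq_of_le hqsw.length_le with hlt | heqlen
      · -- q proper suffix of w ⟹ q palindromic suffix of v longer than p₂
        have hqv : q <:+ v := by
          obtain ⟨r, hr⟩ := hqsw
          have hrne : r ≠ [] := by
            rintro rfl
            rw [List.nil_append] at hr
            rw [hr] at hlt
            omega
          rw [hvdef, ← hr]
          cases r with
          | nil => exact absurd rfl hrne
          | cons b r' => exact ⟨r', by simp⟩
        have := hmax q hqpal hqv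
        omega
      · -- q = w : w is a power of z; contradiction with maximality of p₂
        have hqw : q = w := suffix_eq_of_length hqsw heqlen
        have hs'len : s'.length = 1 := by
          have h1 := congrArg List.length hs
          rw [← hqw] at h1
          simp only [List.length_append, List.length_singleton, hqlen] at h1 ⊢
          omega
        obtain ⟨c, rfl⟩ := List.length_eq_one_iff.1 hs'len
        have heq : c :: (z :: p₂) = z :: (p₂ ++ [z]) := by
          have h' : [c] ++ [z] ++ p₂ = w := hs
          rw [← hqw, hq] at h'
          simpa using h'
        have heq2 : z :: p₂ = p₂ ++ [z] := (List.cons_eq_cons.1 heq).2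
        have hrep : p₂ = List.replicate p₂.length z := concat_comm_replicate heq2
        have hv : v = z :: p₂ := by
          rw [hvdef, ← hs]
          simp
        have hvpal : v.reverse = v := by
          rw [hv, hrep, ← List.replicate_succ, List.reverse_replicate]
        have := hmax v hvpal List.suffix_rfl
        rw [hv] at this
        simp at this
    · -- q infix but not suffix ⟹ p₂ occurs in the interior : contradiction with Lemma D
      obtain ⟨s₁, t₁, h1⟩ := hqinf
      have ht₁ : t₁ ≠ [] := by
        rintro rfl
        exact hqsw ⟨s₁, by simpa using h1⟩
      have hw2 : (s₁ ++ [z]) ++ (p₂ ++ ([z] ++ t₁)) = w := by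
        rw [← h1, hq]; simp
      have hvform : v = (s₁ ++ [z]).tail ++ (p₂ ++ ([z] ++ t₁)) := by
        rw [hvdef, ← hw2, List.tail_append]
        simp
      have hp₂mid : p₂ <:+: v.dropLast := by
        refine ⟨(s₁ ++ [z]).tail, [z] ++ t₁.dropLast, ?_⟩
        rw [hvform]
        rw [List.dropLast_append_of_ne_nil (show p₂ ++ ([z] ++ t₁) ≠ [] by simp)]
        rw [List.dropLast_append_of_ne_nil (show [z] ++ t₁ ≠ [] by simp)]
        rw [List.dropLast_append_of_ne_nil ht₁]
        simp [List.append_assoc]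
      have hvne : v ≠ [] := by
        intro hvnil
        have hql := congrArg List.length h1
        rw [List.length_append, List.length_append, hqlen] at hql
        rw [hvnil] at hvlen
        simp at hvlen
        omega
      exact lps_unioccurrent hvr hvne hp₂pal hp₂suf hmax hp₂mid
  -- counting
  have hsub : insert q (P w) ⊆ P (w ++ [z]) := by
    rw [Set.insert_subset_iff]
    exact ⟨⟨hqpal, hqsufx.isInfix⟩, P_mono ⟨[], [z], by simp⟩⟩
  have h1 : (P (w ++ [z])).ncard ≤ w.length + 2 := by
    have := card_P_append_le w z
    rw [(rich_iff w).1 hw] at this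
    omega
  have h2 : w.length + 2 ≤ (P (w ++ [z])).ncard := by
    have hins : (insert q (P w)).ncard = w.length + 2 := by
      rw [Set.ncard_insert_of_notMem hqnew (P_finite w), (rich_iff w).1 hw]
    rw [← hins]
    exact Set.ncard_le_ncard hsub (P_finite _)
  rw [rich_iff]
  simp only [List.length_append, List.length_singleton]
  omega
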